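/- arXiv:0810.0794 — 12 statements merged into one kernel-verified Lean document; each statement's English description precedes it below -/
import Mathlib

section
/- Let π : 𝟙 → e be an idempotent arrow in a monoidal category M. An object X of M lies in eM (i.e., e ⊗ X ≅ X) if and only if the morphism π ⊗ id_X : 𝟙 ⊗ X → e ⊗ X is an isomorphism; likewise, X lies in Me (i.e., X ⊗ e ≅ X) if and only if id_X ⊗ π : X ⊗ 𝟙 → X ⊗ e is an isomorphism. -/
open CategoryTheory MonoidalCategory

/-- Let `π : 𝟙 → e` be an idempotent arrow in a monoidal category `M`
(i.e. both `π ▷ e : 𝟙 ⊗ e → e ⊗ e` and `e ◁ π : e ⊗ 𝟙 → e ⊗ e` are isomorphisms).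
An object `X` lies in `eM` (i.e. `e ⊗ X ≅ X`) iff `π ▷ X : 𝟙 ⊗ X → e ⊗ X` is an
isomorphism, and `X` lies in `Me` (i.e. `X ⊗ e ≅ X`) iff `X ◁ π : X ⊗ 𝟙 → X ⊗ e`
is an isomorphism. -/
theorem stmt_0 {M : Type*} [Category M] [MonoidalCategory M]
    (e : M) (π : 𝟙_ M ⟶ e) (hπr : IsIso (π ▷ e)) (hπl : IsIso (e ◁ π)) (X : M) :
    (Nonempty (e ⊗ X ≅ X) ↔ IsIso (π ▷ X)) ∧
    (Nonempty (X ⊗ e ≅ X) ↔ IsIso (X ◁ π)) := by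
  constructor
  · constructor
    · rintro ⟨φ⟩
      have h1 : IsIso (π ▷ (e ⊗ X)) := by
        rw [whiskerRight_tensor]
        infer_instance
      have h2 : π ▷ X = inv (𝟙_ M ◁ φ.hom) ≫ π ▷ (e ⊗ X) ≫ e ◁ φ.hom := by
        rw [← whisker_exchange]
        simp
      rw [h2]
      infer_instance
    · intro h
      exact ⟨(asIso (π ▷ X)).symm ≪≫ λ_ X⟩
  · constructor
    · rintro ⟨φ⟩
      have h1 : IsIso ((X ⊗ e) ◁ π) := by
        rw [tensor_whiskerLeft]
        infer_instance
      have h2 : X ◁ π = inv (φ.hom ▷ 𝟙_ M) ≫ (X ⊗ e) ◁ π ≫ φ.hom ▷ e := by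
        rw [whisker_exchange]
        simp
      rw [h2]
      infer_instance
    · intro h
      exact ⟨(asIso (X ◁ π)).symm ≪≫ ρ_ X⟩
end

section
/- Let π : 𝟙 → e be an idempotent arrow in a monoidal category M, let M₀ be an arbitrary object of M, and let X be an object with X ⊗ e ≅ X. If f, g : M₀ ⊗ e → X are two morphisms such that f ∘ (id_{M₀} ⊗ π) = g ∘ (id_{M₀} ⊗ π) as morphisms M₀ ⊗ 𝟙 → X, then f = g. -/
open CategoryTheory MonoidalCategory

/-- Let `π : 𝟙 → e` be an idempotent arrow in a monoidal category `M`,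
`M₀` an arbitrary object, and `X` an object with `X ⊗ e ≅ X`.  If
`f, g : M₀ ⊗ e → X` satisfy `f ∘ (id ⊗ π) = g ∘ (id ⊗ π)` then `f = g`. -/
theorem stmt_1 {M : Type*} [Category M] [MonoidalCategory M]
    (e : M) (π : 𝟙_ M ⟶ e) (hπr : IsIso (π ▷ e)) (hπl : IsIso (e ◁ π))
    (M₀ X : M) (hX : Nonempty (X ⊗ e ≅ X))
    (f g : M₀ ⊗ e ⟶ X) (h : (M₀ ◁ π) ≫ f = (M₀ ◁ π) ≫ g) :
    f = g := by
  obtain ⟨φ⟩ := hX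
  -- Step 1: (M₀ ◁ π) ▷ e is an isomorphism
  have h1 : IsIso ((M₀ ◁ π) ▷ e) := by
    rw [whisker_assoc]
    exact IsIso.comp_isIso' inferInstance (IsIso.comp_isIso' inferInstance inferInstance)
  -- Step 2: f ▷ e = g ▷ e
  have h2 : f ▷ e = g ▷ e := by
    have := congrArg (· ▷ e) h
    simp only [comp_whiskerRight] at this
    exact (cancel_epi ((M₀ ◁ π) ▷ e)).mp this
  -- Step 3: (X ⊗ e) ◁ π is an isomorphism
  have h3 : IsIso ((X ⊗ e) ◁ π) := by
    rw [tensor_whiskerLeft]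
    exact IsIso.comp_isIso' inferInstance (IsIso.comp_isIso' inferInstance inferInstance)
  -- Step 4: X ◁ π is an isomorphism
  have h4 : IsIso (X ◁ π) := by
    have hexch : ((X ⊗ e) ◁ π) ≫ (φ.hom ▷ e) = (φ.hom ▷ 𝟙_ M) ≫ (X ◁ π) :=
      whisker_exchange φ.hom π
    have : IsIso ((φ.hom ▷ 𝟙_ M) ≫ (X ◁ π)) := by
      rw [← hexch]; exact IsIso.comp_isIso' h3 inferInstance
    exact IsIso.of_isIso_comp_left (φ.hom ▷ 𝟙_ M) (X ◁ π)
  -- Step 5: f ▷ 𝟙 ≫ X ◁ π = (M₀ ⊗ e) ◁ π ≫ f ▷ e, so f ▷ 𝟙 = g ▷ 𝟙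
  have h5 : f ▷ (𝟙_ M) = g ▷ (𝟙_ M) := by
    have ef : ((M₀ ⊗ e) ◁ π) ≫ (f ▷ e) = (f ▷ 𝟙_ M) ≫ (X ◁ π) :=
      whisker_exchange f π
    have eg : ((M₀ ⊗ e) ◁ π) ≫ (g ▷ e) = (g ▷ 𝟙_ M) ≫ (X ◁ π) :=
      whisker_exchange g π
    have : (f ▷ 𝟙_ M) ≫ (X ◁ π) = (g ▷ 𝟙_ M) ≫ (X ◁ π) := by
      rw [← ef, ← eg, h2]
    exact (cancel_mono (X ◁ π)).mp this
  -- Step 6: conclude via the right unitor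
  have := congrArg (fun t => (ρ_ (M₀ ⊗ e)).inv ≫ t ≫ (ρ_ X).hom) h5
  simpa using this
end

section
/- If π : 𝟙 → e is an idempotent arrow in a monoidal category M and f : e → e is a morphism such that f ∘ π = π, then f = id_e. In particular, an idempotent arrow has no nontrivial automorphisms. -/
open CategoryTheory MonoidalCategory

/-- If `π : 𝟙 → e` is an idempotent arrow in a monoidal category `M`
and `f : e → e` satisfies `f ∘ π = π`, then `f = id_e`. -/
theorem stmt_2 {M : Type*} [Category M] [MonoidalCategory M]
    (e : M) (π : 𝟙_ M ⟶ e) (hπr : IsIso (π ▷ e)) (hπl : IsIso (e ◁ π))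
    (f : e ⟶ e) (hf : π ≫ f = π) :
    f = 𝟙 e := by
  have h2 : e ◁ f = 𝟙 (e ⊗ e) := by
    rw [← cancel_epi (e ◁ π), ← MonoidalCategory.whiskerLeft_comp, hf,
      Category.comp_id]
  have h3 : 𝟙_ M ◁ f = 𝟙 (𝟙_ M ⊗ e) := by
    rw [← cancel_mono (π ▷ e), MonoidalCategory.whisker_exchange, h2,
      Category.comp_id, Category.id_comp]
  have h4 := MonoidalCategory.leftUnitor_naturality f
  rw [h3, Category.id_comp] at h4
  simpa using (cancel_epi (λ_ e).hom).mp (by simpa using h4.symm)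
end

section
/- If π : 𝟙 → e is an idempotent arrow in a monoidal category M, then the two morphisms e → e ⊗ e given by (π ⊗ id_e) ∘ λ_e⁻¹ and (id_e ⊗ π) ∘ ρ_e⁻¹ are equal, i.e., the diagram formed by the left and right unitor inverses of e followed by π ⊗ id_e and id_e ⊗ π commutes. -/
open CategoryTheory MonoidalCategory

/-- If `π : 𝟙 → e` is an idempotent arrow in a monoidal category `M`,
then `(π ⊗ id_e) ∘ λ_e⁻¹ = (id_e ⊗ π) ∘ ρ_e⁻¹ : e → e ⊗ e`. -/
theorem stmt_3 {M : Type*} [Category M] [MonoidalCategory M]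
    (e : M) (π : 𝟙_ M ⟶ e) (hπr : IsIso (π ▷ e)) (hπl : IsIso (e ◁ π)) :
    (λ_ e).inv ≫ (π ▷ e) = (ρ_ e).inv ≫ (e ◁ π) := by
  set f : e ⟶ e ⊗ e := (λ_ e).inv ≫ (π ▷ e) with hf
  set g : e ⟶ e ⊗ e := (ρ_ e).inv ≫ (e ◁ π) with hg
  -- Step 1: π ≫ f = π ≫ g
  have h1 : π ≫ f = π ≫ g := by
    have hl : π ≫ (λ_ e).inv = (λ_ (𝟙_ M)).inv ≫ (𝟙_ M ◁ π) := by
      rw [Iso.eq_inv_comp, ← leftUnitor_naturality]; simp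
    have hr : π ≫ (ρ_ e).inv = (ρ_ (𝟙_ M)).inv ≫ (π ▷ 𝟙_ M) := by
      rw [Iso.eq_inv_comp, ← rightUnitor_naturality]; simp
    have hu : (λ_ (𝟙_ M)).inv = (ρ_ (𝟙_ M)).inv := Iso.inv_eq_inv _ _ |>.mpr unitors_equal
    rw [hf, hg, ← Category.assoc, ← Category.assoc, hl, hr, Category.assoc, Category.assoc,
      whisker_exchange, hu]
  -- Step 2: e ◁ f = e ◁ g
  have h2 : e ◁ f = e ◁ g := by
    have := congrArg (fun t => e ◁ t) h1
    simp only [MonoidalCategory.whiskerLeft_comp] at this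
    exact (cancel_epi (e ◁ π)).mp this
  -- Step 3: 𝟙 ◁ f = 𝟙 ◁ g
  haveI : IsIso (π ▷ (e ⊗ e)) := by
    rw [whiskerRight_tensor]
    infer_instance
  have h3 : 𝟙_ M ◁ f = 𝟙_ M ◁ g := by
    have e1 : 𝟙_ M ◁ f ≫ π ▷ (e ⊗ e) = π ▷ e ≫ e ◁ f := whisker_exchange π f
    have e2 : 𝟙_ M ◁ g ≫ π ▷ (e ⊗ e) = π ▷ e ≫ e ◁ g := whisker_exchange π g
    have : 𝟙_ M ◁ f ≫ π ▷ (e ⊗ e) = 𝟙_ M ◁ g ≫ π ▷ (e ⊗ e) := by rw [e1, e2, h2]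
    exact (cancel_mono (π ▷ (e ⊗ e))).mp this
  -- Step 4: conclude
  have h4 : f = g := by
    have nf : 𝟙_ M ◁ f ≫ (λ_ (e ⊗ e)).hom = (λ_ e).hom ≫ f := leftUnitor_naturality f
    have ng : 𝟙_ M ◁ g ≫ (λ_ (e ⊗ e)).hom = (λ_ e).hom ≫ g := leftUnitor_naturality g
    have : (λ_ e).hom ≫ f = (λ_ e).hom ≫ g := by rw [← nf, ← ng, h3]
    exact (cancel_epi (λ_ e).hom).mp this
  exact h4
end

section
/- If π : 𝟙 → e is an idempotent arrow in a monoidal category M, then the map π* : Hom(e, e) → Hom(𝟙, e) given by f ↦ f ∘ π is bijective. -/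
open CategoryTheory MonoidalCategory

/-- If `π : 𝟙 → e` is an idempotent arrow in a monoidal category `M`,
then the map `π* : Hom(e, e) → Hom(𝟙, e)`, `f ↦ f ∘ π`, is bijective. -/
theorem stmt_4 {M : Type*} [Category M] [MonoidalCategory M]
    (e : M) (π : 𝟙_ M ⟶ e) (hπr : IsIso (π ▷ e)) (hπl : IsIso (e ◁ π)) :
    Function.Bijective (fun f : e ⟶ e => π ≫ f) := by
  constructor
  · intro f g hfg
    simp only at hfg
    have h1 : e ◁ π ≫ e ◁ f = e ◁ π ≫ e ◁ g := by
      rw [← MonoidalCategory.whiskerLeft_comp, ← MonoidalCategory.whiskerLeft_comp, hfg]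
    have h2 : e ◁ f = e ◁ g := by
      exact (cancel_epi (e ◁ π)).mp h1
    have h3 : f ≫ (λ_ e).inv ≫ π ▷ e = g ≫ (λ_ e).inv ≫ π ▷ e := by
      have nf : f ≫ (λ_ e).inv = (λ_ e).inv ≫ 𝟙_ M ◁ f := by
        rw [← cancel_mono (λ_ e).hom]; simp
      have ng : g ≫ (λ_ e).inv = (λ_ e).inv ≫ 𝟙_ M ◁ g := by
        rw [← cancel_mono (λ_ e).hom]; simp
      rw [reassoc_of% nf, reassoc_of% ng, whisker_exchange, whisker_exchange, h2]
    simpa [cancel_mono] using h3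
  · intro h
    refine ⟨(ρ_ e).inv ≫ e ◁ h ≫ inv (π ▷ e) ≫ (λ_ e).hom, ?_⟩
    simp only
    have n1 : π ≫ (ρ_ e).inv = (ρ_ (𝟙_ M)).inv ≫ π ▷ 𝟙_ M := by
      rw [← cancel_mono (ρ_ e).hom]; simp
    rw [reassoc_of% n1, ← whisker_exchange_assoc, IsIso.hom_inv_id_assoc]
    rw [MonoidalCategory.leftUnitor_naturality, ← unitors_inv_equal]; simp
end

section
/- If π : 𝟙 → e and π' : 𝟙 → e are two idempotent arrows in a monoidal category M with the same codomain e, then there exists a unique morphism σ : e → e such that π' = σ ∘ π, and moreover this σ is an isomorphism. -/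
open CategoryTheory MonoidalCategory

lemma stmt5_aux {M : Type*} [Category M] [MonoidalCategory M]
    (e : M) (π : 𝟙_ M ⟶ e)
    (hπr : IsIso (π ▷ e)) (hπl : IsIso (e ◁ π)) (σ : e ⟶ e) :
    σ = (λ_ e).inv ≫ (π ▷ e) ≫ inv (e ◁ π) ≫ (e ◁ (π ≫ σ)) ≫ inv (π ▷ e) ≫ (λ_ e).hom := by
  have h1 : e ◁ (π ≫ σ) = (e ◁ π) ≫ (e ◁ σ) := by simp
  have h2 : (𝟙_ M ◁ σ) ≫ (π ▷ e) = (π ▷ e) ≫ (e ◁ σ) := (whisker_exchange π σ)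
  have h3 : σ = (λ_ e).inv ≫ (𝟙_ M ◁ σ) ≫ (λ_ e).hom := by simp
  rw [h1]
  rw [show (π ▷ e) ≫ inv (e ◁ π) ≫ ((e ◁ π) ≫ (e ◁ σ)) ≫ inv (π ▷ e) ≫ (λ_ e).hom
      = ((π ▷ e) ≫ (e ◁ σ)) ≫ inv (π ▷ e) ≫ (λ_ e).hom by simp]
  rw [← h2]
  simpa using h3

/-- If `π, π' : 𝟙 → e` are two idempotent arrows with the same codomain
`e`, then there is a unique `σ : e → e` with `π' = σ ∘ π`, and this `σ` is an
isomorphism. -/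
theorem stmt_5 {M : Type*} [Category M] [MonoidalCategory M]
    (e : M) (π π' : 𝟙_ M ⟶ e)
    (hπr : IsIso (π ▷ e)) (hπl : IsIso (e ◁ π))
    (hπ'r : IsIso (π' ▷ e)) (hπ'l : IsIso (e ◁ π')) :
    (∃! σ : e ⟶ e, π ≫ σ = π') ∧ (∀ σ : e ⟶ e, π ≫ σ = π' → IsIso σ) := by
  set σ₀ : e ⟶ e :=
    (λ_ e).inv ≫ (π ▷ e) ≫ inv (e ◁ π) ≫ (e ◁ π') ≫ inv (π ▷ e) ≫ (λ_ e).hom with hσ₀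
  have hcomp : π ≫ σ₀ = π' := by
    rw [hσ₀]
    have h1 : π ≫ (λ_ e).inv = (λ_ (𝟙_ M)).inv ≫ (𝟙_ M ◁ π) := by simp
    have h2 : (𝟙_ M ◁ π) ≫ (π ▷ e) = (π ▷ 𝟙_ M) ≫ (e ◁ π) := whisker_exchange π π
    have h3 : (π ▷ 𝟙_ M) ≫ (e ◁ π') = (𝟙_ M ◁ π') ≫ (π ▷ e) := (whisker_exchange π π').symm
    calc π ≫ (λ_ e).inv ≫ (π ▷ e) ≫ inv (e ◁ π) ≫ (e ◁ π') ≫ inv (π ▷ e) ≫ (λ_ e).hom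
        = (λ_ (𝟙_ M)).inv ≫ ((𝟙_ M ◁ π) ≫ (π ▷ e)) ≫ inv (e ◁ π) ≫ (e ◁ π') ≫ inv (π ▷ e) ≫ (λ_ e).hom := by
          rw [← Category.assoc, h1]; simp
      _ = (λ_ (𝟙_ M)).inv ≫ (π ▷ 𝟙_ M) ≫ ((e ◁ π) ≫ inv (e ◁ π)) ≫ (e ◁ π') ≫ inv (π ▷ e) ≫ (λ_ e).hom := by
          rw [h2]; simp
      _ = (λ_ (𝟙_ M)).inv ≫ ((π ▷ 𝟙_ M) ≫ (e ◁ π')) ≫ inv (π ▷ e) ≫ (λ_ e).hom := by simp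
      _ = (λ_ (𝟙_ M)).inv ≫ (𝟙_ M ◁ π') ≫ ((π ▷ e) ≫ inv (π ▷ e)) ≫ (λ_ e).hom := by
          rw [h3]; simp
      _ = (λ_ (𝟙_ M)).inv ≫ (𝟙_ M ◁ π') ≫ (λ_ e).hom := by simp
      _ = π' := by simp
  have huniq : ∀ σ : e ⟶ e, π ≫ σ = π' → σ = σ₀ := by
    intro σ hσ
    have := stmt5_aux e π hπr hπl σ
    rw [hσ] at this
    rw [this, hσ₀]
  constructor
  · exact ⟨σ₀, hcomp, huniq⟩
  · intro σ hσ
    rw [huniq σ hσ, hσ₀]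
    infer_instance
end

section
/- Let π : 𝟙 → e be an idempotent arrow in a monoidal category M. Let X be an object such that id_X ⊗ π : X ⊗ 𝟙 → X ⊗ e is an isomorphism, and Y an object such that π ⊗ id_Y : 𝟙 ⊗ Y → e ⊗ Y is an isomorphism. Define ρ^π_X = ρ_X ∘ (id_X ⊗ π)⁻¹ : X ⊗ e → X and λ^π_Y = λ_Y ∘ (π ⊗ id_Y)⁻¹ : e ⊗ Y → Y. Then (id_X ⊗ λ^π_Y) ∘ α_{X,e,Y} = ρ^π_X ⊗ id_Y as morphisms (X ⊗ e) ⊗ Y → X ⊗ Y; together with the equality λ^π_e = ρ^π_e, this shows that the Hecke subcategory eMe (of objects X with e ⊗ X ⊗ e ≅ X) is a monoidal category with unit object e and unit constraints λ^π, ρ^π. -/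
open CategoryTheory MonoidalCategory

lemma aux_part1 {M : Type*} [Category M] [MonoidalCategory M]
    (e : M) (π : 𝟙_ M ⟶ e)
    (X Y : M) (hX : IsIso (X ◁ π)) (hY : IsIso (π ▷ Y)) :
    (α_ X e Y).hom ≫ (X ◁ (inv (π ▷ Y) ≫ (λ_ Y).hom)) =
      (inv (X ◁ π) ≫ (ρ_ X).hom) ▷ Y := by
  rw [← cancel_epi ((X ◁ π) ▷ Y)]
  rw [comp_whiskerRight, ← Category.assoc, ← Category.assoc,
    MonoidalCategory.whiskerLeft_comp]
  rw [associator_naturality_middle]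
  rw [Category.assoc, ← MonoidalCategory.whiskerLeft_comp_assoc,
    IsIso.hom_inv_id, MonoidalCategory.whiskerLeft_id, Category.id_comp,
    ← comp_whiskerRight, IsIso.hom_inv_id, id_whiskerRight, Category.id_comp,
    MonoidalCategory.triangle]

lemma aux_part2 {M : Type*} [Category M] [MonoidalCategory M]
    (e : M) (π : 𝟙_ M ⟶ e) (hπr : IsIso (π ▷ e)) (hπl : IsIso (e ◁ π)) :
    inv (π ▷ e) ≫ (λ_ e).hom = inv (e ◁ π) ≫ (ρ_ e).hom := by
  set a : e ⊗ e ⟶ e := inv (π ▷ e) ≫ (λ_ e).hom with ha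
  set b : e ⊗ e ⟶ e := inv (e ◁ π) ≫ (ρ_ e).hom with hb
  set v : e ⟶ e ⊗ e := (ρ_ e).inv ≫ (e ◁ π) with hv
  have main : (α_ e e e).hom ≫ e ◁ a = b ▷ e := aux_part1 e π e e hπl hπr
  have h1 : e ◁ a = (α_ e e e).inv ≫ b ▷ e := by
    rw [← main, Iso.inv_hom_id_assoc]
  have key : e ◁ (v ≫ a) = b ≫ v := by
    rw [MonoidalCategory.whiskerLeft_comp, h1, hv,
      MonoidalCategory.whiskerLeft_comp, Category.assoc,
      associator_inv_naturality_right_assoc,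
      whisker_exchange,
      ← rightUnitor_tensor_inv_assoc,
      ← rightUnitor_inv_naturality_assoc]
  have comm : e ◁ (v ≫ a) ≫ a = a ≫ (v ≫ a) := by
    have hex : e ◁ (v ≫ a) = inv (π ▷ e) ≫ 𝟙_ M ◁ (v ≫ a) ≫ π ▷ e := by
      rw [whisker_exchange, IsIso.inv_hom_id_assoc]
    rw [hex, ha, Category.assoc, Category.assoc, IsIso.hom_inv_id_assoc,
      leftUnitor_naturality]
    simp only [Category.assoc]
  have hiso : IsIso (v ≫ a) := by
    have : IsIso a := by rw [ha]; infer_instance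
    have : IsIso v := by rw [hv]; infer_instance
    infer_instance
  rw [← cancel_mono (v ≫ a)]
  calc a ≫ (v ≫ a) = e ◁ (v ≫ a) ≫ a := comm.symm
    _ = (b ≫ v) ≫ a := by rw [key]
    _ = b ≫ (v ≫ a) := by rw [Category.assoc]

/-- Let `π : 𝟙 → e` be an idempotent arrow in a monoidal category `M`.
Let `X` be such that `X ◁ π : X ⊗ 𝟙 → X ⊗ e` is an isomorphism and `Y` such that
`π ▷ Y : 𝟙 ⊗ Y → e ⊗ Y` is an isomorphism.  With
`ρ^π_X = ρ_X ∘ (id_X ⊗ π)⁻¹` and `λ^π_Y = λ_Y ∘ (π ⊗ id_Y)⁻¹`, we have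
`(id_X ⊗ λ^π_Y) ∘ α_{X,e,Y} = ρ^π_X ⊗ id_Y`; moreover `λ^π_e = ρ^π_e`
(the two facts making the Hecke subcategory `eMe` monoidal with unit `e`). -/
theorem stmt_6 {M : Type*} [Category M] [MonoidalCategory M]
    (e : M) (π : 𝟙_ M ⟶ e) (hπr : IsIso (π ▷ e)) (hπl : IsIso (e ◁ π))
    (X Y : M) (hX : IsIso (X ◁ π)) (hY : IsIso (π ▷ Y)) :
    ((α_ X e Y).hom ≫ (X ◁ (inv (π ▷ Y) ≫ (λ_ Y).hom)) =
      (inv (X ◁ π) ≫ (ρ_ X).hom) ▷ Y) ∧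
    (inv (π ▷ e) ≫ (λ_ e).hom = inv (e ◁ π) ≫ (ρ_ e).hom) := by
  exact ⟨aux_part1 e π X Y hX hY, aux_part2 e π hπr hπl⟩
end

section
/- Let C be a category, P : C → C an endofunctor, and ε : Id_C → P an idempotent arrow in the category of endofunctors of C (i.e., ε_{P(Y)} and P(ε_Y) are isomorphisms for all Y). Let D be the full subcategory of C consisting of objects X such that ε_X is an isomorphism. Then P(X) lies in D for every object X of C, the functor C → D induced by P is left adjoint to the inclusion functor D → C, and consequently D is a reflective subcategory of C. -/
open CategoryTheory

/-- Let `P : C ⥤ C` and `ε : Id_C ⟶ P` be an idempotent arrow in the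
category of endofunctors of `C` (i.e. `ε_{P(Y)}` and `P(ε_Y)` are isomorphisms for
all `Y`).  Let `D` be the full subcategory of objects `X` such that `ε_X` is an
isomorphism.  Then `P(X)` lies in `D` for every `X`, and the functor `C ⥤ D`
induced by `P` is left adjoint to the inclusion `D ⥤ C`; a fortiori `D` is a
reflective subcategory of `C`. -/
theorem stmt_9 {C : Type*} [Category C] (P : C ⥤ C) (ε : 𝟭 C ⟶ P)
    (h₁ : ∀ Y : C, IsIso (ε.app (P.obj Y)))
    (h₂ : ∀ Y : C, IsIso (P.map (ε.app Y))) :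
    ∃ h : ∀ X : C, IsIso (ε.app (P.obj X)),
      Nonempty
        (ObjectProperty.lift (fun X : C => IsIso (ε.app X)) P h ⊣
          ObjectProperty.ι (fun X : C => IsIso (ε.app X))) := by
  -- key lemma: `P.map (ε.app X) = ε.app (P.obj X)`
  have key : ∀ X : C, P.map (ε.app X) = ε.app (P.obj X) := by
    intro X
    haveI := h₁ X
    haveI := h₁ (P.obj X)
    haveI := h₂ X
    -- (*) ε.app (P (P X)) = P.map (ε.app (P X))
    have star : ε.app (P.obj (P.obj X)) = P.map (ε.app (P.obj X)) := by
      have ha := ε.naturality (ε.app (P.obj X))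
      simp only [Functor.id_map] at ha
      simp only [Functor.id_obj] at ha
      exact (cancel_epi (ε.app (P.obj X))).1 ha
    -- (**) from naturality at ε.app X, applying P and cancelling P (ε X):
    have hb : P.map (ε.app (P.obj X)) = P.map (P.map (ε.app X)) := by
      have ha := ε.naturality (ε.app X)
      simp only [Functor.id_map] at ha
      have hb' := congrArg P.map ha
      simp only [P.map_comp] at hb'
      exact (cancel_epi (P.map (ε.app X))).1 hb'
    -- (***) naturality at P.map (ε.app X)
    have hc := ε.naturality (P.map (ε.app X))
    simp only [Functor.id_map] at hc
    rw [← hb, ← star] at hc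
    exact (cancel_mono (ε.app (P.obj (P.obj X)))).1 hc
  refine ⟨h₁, ⟨Adjunction.mkOfHomEquiv
    { homEquiv := fun X Y =>
        { toFun := fun f => ε.app X ≫ f.hom
          invFun := fun g =>
            ObjectProperty.homMk (show P.obj X ⟶ Y.obj from
              P.map g ≫ @inv C _ _ _ (ε.app Y.obj) Y.property)
          left_inv := by
            intro f
            haveI : IsIso (ε.app Y.obj) := Y.property
            have hn := ε.naturality (show P.obj X ⟶ Y.obj from f.hom)
            simp only [Functor.id_map] at hn
            apply ObjectProperty.hom_ext
            show P.map (ε.app X ≫ f.hom) ≫ inv (ε.app Y.obj) = f.hom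
            rw [P.map_comp, key X, Category.assoc, ← Category.assoc, ← hn]
            simp
          right_inv := by
            intro g
            haveI : IsIso (ε.app Y.obj) := Y.property
            have hn := ε.naturality g
            simp only [Functor.id_map] at hn
            show ε.app X ≫ P.map g ≫ inv (ε.app Y.obj) = g
            rw [← Category.assoc, ← hn]
            simp }
      homEquiv_naturality_left_symm := by
        intro X X' Y f g
        haveI : IsIso (ε.app Y.obj) := Y.property
        apply ObjectProperty.hom_ext
        show P.map (f ≫ g) ≫ inv (ε.app Y.obj) =
          (P.map f ≫ P.map g ≫ inv (ε.app Y.obj) : P.obj X ⟶ Y.obj)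
        simp
      homEquiv_naturality_right := by
        intro X Y Y' f g
        show ε.app X ≫ (f ≫ g).hom = (ε.app X ≫ f.hom) ≫ (ObjectProperty.ι _).map g
        simp [ObjectProperty.ι] }⟩⟩
end

section
/- Let M be a weakly symmetric monoidal category with a zero object 0. A weak idempotent e in M is a minimal weak idempotent if and only if e ≠ 0 and every weak idempotent X lying in the Hecke subcategory eM with X ≠ 0 is isomorphic to e. -/
open CategoryTheory MonoidalCategory Limits

/-- An object `e` of a monoidal category is a weak idempotent if `e ⊗ e ≅ e`. -/
def WeakIdempotent {M : Type*} [Category M] [MonoidalCategory M] (e : M) : Prop :=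
  Nonempty (e ⊗ e ≅ e)

/-- In a (weakly symmetric) monoidal category with a zero object, a minimal weak
idempotent is a nonzero weak idempotent `e` such that for every weak idempotent `e'`
one has either `e ⊗ e' = 0` or `e ⊗ e' ≅ e`. -/
def MinimalWeakIdempotent {M : Type*} [Category M] [MonoidalCategory M] (e : M) : Prop :=
  WeakIdempotent e ∧ ¬ IsZero e ∧
    ∀ e' : M, WeakIdempotent e' → IsZero (e ⊗ e') ∨ Nonempty (e ⊗ e' ≅ e)

/-- Let `M` be a weakly symmetric monoidal category (the tensor functor
is isomorphic to its flip) with a zero object.  A weak idempotent `e` is a minimal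
weak idempotent iff `e ≠ 0` and every nonzero weak idempotent `X` lying in the Hecke
subcategory `eM` (i.e. with `e ⊗ X ≅ X`) is isomorphic to `e`. -/
theorem stmt_10 {M : Type*} [Category M] [MonoidalCategory M] [HasZeroObject M]
    (ws : Nonempty (curriedTensor M ≅ (curriedTensor M).flip))
    (e : M) (he : WeakIdempotent e) :
    MinimalWeakIdempotent e ↔
      (¬ IsZero e ∧ ∀ X : M, WeakIdempotent X → Nonempty (e ⊗ X ≅ X) →
        ¬ IsZero X → Nonempty (X ≅ e)) := by
  obtain ⟨σ⟩ := ws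
  obtain ⟨f⟩ := he
  constructor
  · rintro ⟨-, hne, hmin⟩
    refine ⟨hne, fun X hX ⟨hEX⟩ hXne => ?_⟩
    rcases hmin X hX with h | ⟨g⟩
    · exact absurd (h.of_iso hEX.symm) hXne
    · exact ⟨hEX.symm ≪≫ g.some⟩
  · rintro ⟨hne, h⟩
    refine ⟨⟨f⟩, hne, fun e' he' => ?_⟩
    obtain ⟨f'⟩ := he'
    -- swap iso e' ⊗ e ≅ e ⊗ e'
    let sw : e' ⊗ e ≅ e ⊗ e' := (σ.app e').app e
    -- (e⊗e')⊗(e⊗e') ≅ e⊗e'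
    have idem : (e ⊗ e') ⊗ (e ⊗ e') ≅ e ⊗ e' :=
      (α_ (e ⊗ e') e e').symm ≪≫
        whiskerRightIso ((α_ e e' e) ≪≫ whiskerLeftIso e sw ≪≫ (α_ e e e').symm ≪≫
          whiskerRightIso f e') e' ≪≫ (α_ e e' e') ≪≫ whiskerLeftIso e f'
    have absorb : e ⊗ (e ⊗ e') ≅ e ⊗ e' :=
      (α_ e e e').symm ≪≫ whiskerRightIso f e'
    by_cases hz : IsZero (e ⊗ e')
    · exact Or.inl hz
    · rcases h (e ⊗ e') ⟨idem⟩ ⟨absorb⟩ hz with ⟨g⟩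
      exact Or.inr ⟨g⟩
end

section
/- If e is a closed idempotent in a monoidal category M, then the functor M → eM given by X ↦ e ⊗ X is left adjoint to the inclusion functor eM → M, where eM is the full subcategory of M consisting of objects X with e ⊗ X ≅ X. -/
open CategoryTheory MonoidalCategory

section Aux

variable {M : Type*} [Category M] [MonoidalCategory M] (e : M) (π : 𝟙_ M ⟶ e)

/-- the natural map `X ⟶ e ⊗ X`. -/
def uMap (X : M) : X ⟶ e ⊗ X := (λ_ X).inv ≫ π ▷ X

lemma uMap_natural {X Y : M} (g : X ⟶ Y) :
    g ≫ uMap e π Y = uMap e π X ≫ e ◁ g := by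
  rw [uMap, uMap, ← Category.assoc, leftUnitor_inv_naturality, Category.assoc,
    whisker_exchange, Category.assoc]

lemma isIso_uMap_tensor [IsIso (π ▷ e)] (X : M) : IsIso (uMap e π (e ⊗ X)) := by
  have : IsIso (π ▷ (e ⊗ X)) := by
    rw [whiskerRight_tensor]
    infer_instance
  unfold uMap; infer_instance

/-- Boyarchenko–Drinfeld: the two maps `e ⟶ e ⊗ e` agree. -/
lemma bd [IsIso (π ▷ e)] [IsIso (e ◁ π)] :
    (λ_ e).inv ≫ π ▷ e = (ρ_ e).inv ≫ e ◁ π := by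
  set a : e ⟶ e ⊗ e := (λ_ e).inv ≫ π ▷ e with ha
  set b : e ⟶ e ⊗ e := (ρ_ e).inv ≫ e ◁ π with hb
  have h1 : π ≫ a = π ≫ b := by
    have hex := whisker_exchange (C := M) π π
    have hl : 𝟙_ M ◁ π = (λ_ (𝟙_ M)).hom ≫ π ≫ (λ_ e).inv := by
      rw [← leftUnitor_naturality]; simp
    have hr : π ▷ 𝟙_ M = (ρ_ (𝟙_ M)).hom ≫ π ≫ (ρ_ e).inv := by
      rw [← rightUnitor_naturality]; simp
    rw [hl, hr] at hex
    simp only [Category.assoc] at hex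
    rw [unitors_equal] at hex
    exact (cancel_epi (ρ_ (𝟙_ M)).hom).1 hex
  have h2 : e ◁ a = e ◁ b := by
    have := congrArg (fun f => e ◁ f) h1
    simp only [MonoidalCategory.whiskerLeft_comp] at this
    exact (cancel_epi (e ◁ π)).1 this
  have h3 : a ≫ uMap e π (e ⊗ e) = b ≫ uMap e π (e ⊗ e) := by
    have na := uMap_natural e π a
    have nb := uMap_natural e π b
    have hue : uMap e π e = a := rfl
    rw [na, nb, hue, h2]
  have : IsIso (uMap e π (e ⊗ e)) := isIso_uMap_tensor e π e
  exact (cancel_mono (uMap e π (e ⊗ e))).1 h3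

lemma uMap_tensor [IsIso (π ▷ e)] [IsIso (e ◁ π)] (X : M) :
    uMap e π (e ⊗ X) = e ◁ uMap e π X := by
  have key := bd e π
  calc uMap e π (e ⊗ X)
      = (((λ_ e).inv ≫ π ▷ e) ▷ X) ≫ (α_ e e X).hom := by
        rw [uMap, leftUnitor_tensor_inv, whiskerRight_tensor]
        simp
    _ = (((ρ_ e).inv ≫ e ◁ π) ▷ X) ≫ (α_ e e X).hom := by rw [key]
    _ = e ◁ uMap e π X := by
        rw [uMap, MonoidalCategory.whiskerLeft_comp, comp_whiskerRight, whisker_assoc]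
        simp [triangle_assoc_comp_right_inv]

lemma isIso_uMap_mem [IsIso (π ▷ e)] {Y : M} (h : Nonempty (e ⊗ Y ≅ Y)) :
    IsIso (uMap e π Y) := by
  obtain ⟨f⟩ := h
  have h1 : IsIso (π ▷ (e ⊗ Y)) := by rw [whiskerRight_tensor]; infer_instance
  have hex : 𝟙_ M ◁ f.hom ≫ π ▷ Y = π ▷ (e ⊗ Y) ≫ e ◁ f.hom := whisker_exchange π f.hom
  have : IsIso (π ▷ Y) := by
    have : π ▷ Y = inv (𝟙_ M ◁ f.hom) ≫ π ▷ (e ⊗ Y) ≫ e ◁ f.hom := by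
      rw [← hex]; simp
    rw [this]; infer_instance
  unfold uMap; infer_instance

end Aux

/-- If `e` is a closed idempotent in a monoidal category `M` (i.e.
there is an idempotent arrow `π : 𝟙 → e`), then the functor `M → eM`, `X ↦ e ⊗ X`,
is left adjoint to the inclusion of the full subcategory `eM` of objects `X` with
`e ⊗ X ≅ X`. -/
theorem stmt_11 {M : Type*} [Category M] [MonoidalCategory M]
    (e : M) (π : 𝟙_ M ⟶ e) (hπr : IsIso (π ▷ e)) (hπl : IsIso (e ◁ π)) :
    ∃ L : M ⥤ ObjectProperty.FullSubcategory (fun X : M => Nonempty (e ⊗ X ≅ X)),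
      Nonempty (L ⋙ ObjectProperty.ι (fun X : M => Nonempty (e ⊗ X ≅ X)) ≅
        tensorLeft e) ∧
      Nonempty (L ⊣ ObjectProperty.ι (fun X : M => Nonempty (e ⊗ X ≅ X))) := by
  set P := fun X : M => Nonempty (e ⊗ X ≅ X) with hP
  have hmem : ∀ X : M, P ((tensorLeft e).obj X) := fun X => by
    haveI := isIso_uMap_tensor e π X
    exact ⟨(asIso (uMap e π (e ⊗ X))).symm⟩
  haveI hiso : ∀ Y : ObjectProperty.FullSubcategory P, IsIso (uMap e π Y.obj) :=
    fun Y => isIso_uMap_mem e π Y.property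
  refine ⟨ObjectProperty.lift P (tensorLeft e) hmem,
    ⟨ObjectProperty.liftCompιIso P (tensorLeft e) hmem⟩, ⟨?_⟩⟩
  refine
  { unit :=
    { app := fun X => uMap e π X
      naturality := fun X Y g => by
        dsimp [ObjectProperty.lift, ObjectProperty.ι]
        exact uMap_natural e π g }
    counit :=
    { app := fun Y => ObjectProperty.homMk (inv (uMap e π Y.obj) : e ⊗ Y.obj ⟶ Y.obj)
      naturality := fun Y Y' g => by
        ext
        dsimp [ObjectProperty.lift, ObjectProperty.ι]
        change e ◁ g.hom ≫ inv (uMap e π Y'.obj) = inv (uMap e π Y.obj) ≫ g.hom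
        rw [IsIso.comp_inv_eq, Category.assoc, IsIso.eq_inv_comp]
        exact (uMap_natural e π g.hom).symm }
    left_triangle_components := fun X => by
      haveI := isIso_uMap_tensor e π X
      ext
      dsimp [ObjectProperty.lift, ObjectProperty.ι]
      change e ◁ uMap e π X ≫ inv (uMap e π (e ⊗ X)) = 𝟙 _
      rw [← uMap_tensor e π X, IsIso.hom_inv_id]
    right_triangle_components := fun Y => by
      dsimp [ObjectProperty.lift, ObjectProperty.ι]
      change uMap e π Y.obj ≫ inv (uMap e π Y.obj) = 𝟙 _
      rw [IsIso.hom_inv_id] }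
end

section
/- Let M be a weakly symmetric monoidal category and let e be a weak idempotent in M. If the functor M → eM given by X ↦ e ⊗ X is left adjoint to the inclusion functor eM → M, then e is a closed idempotent in M. -/
open CategoryTheory MonoidalCategory

/-- Let `M` be a weakly symmetric monoidal category (the tensor functor
is isomorphic to its flip) and `e` a weak idempotent in `M`.  If the functor
`M → eM`, `X ↦ e ⊗ X`, is left adjoint to the inclusion of the full subcategory
`eM = {X | e ⊗ X ≅ X}`, then `e` is a closed idempotent, i.e. there exists an
idempotent arrow `π : 𝟙 → e`. -/
theorem stmt_12 {M : Type*} [Category M] [MonoidalCategory M]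
    (ws : Nonempty (curriedTensor M ≅ (curriedTensor M).flip))
    (e : M) (he : Nonempty (e ⊗ e ≅ e))
    (L : M ⥤ ObjectProperty.FullSubcategory (fun X : M => Nonempty (e ⊗ X ≅ X)))
    (hL : L ⋙ ObjectProperty.ι (fun X : M => Nonempty (e ⊗ X ≅ X)) ≅
      tensorLeft e)
    (adj : L ⊣ ObjectProperty.ι (fun X : M => Nonempty (e ⊗ X ≅ X))) :
    ∃ π : 𝟙_ M ⟶ e, IsIso (π ▷ e) ∧ IsIso (e ◁ π) := by
  obtain ⟨β⟩ := ws
  let ι := ObjectProperty.ι (fun X : M => Nonempty (e ⊗ X ≅ X))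
  -- key: for any f : X ⟶ Y with ι.map (L.map f) iso, e ◁ f is iso
  have key : ∀ {X Y : M} (f : X ⟶ Y), IsIso (ι.map (L.map f)) → IsIso (e ◁ f) := by
    intro X Y f hf
    have h := hL.hom.naturality f
    simp only [curriedTensor_obj_map, Functor.comp_map] at h
    have heq : e ◁ f = hL.inv.app X ≫ ι.map (L.map f) ≫ hL.hom.app Y := by
      rw [← cancel_epi (hL.hom.app X), ← h]
      simp [ι]
    rw [heq]
    exact IsIso.comp_isIso' (inferInstance) (@IsIso.comp_isIso _ _ _ _ _ _ _ hf _)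
  -- the unit yields a map X ⟶ e ⊗ X
  have uiso : ∀ X : M, IsIso (e ◁ adj.unit.app X) := by
    intro X
    exact key (adj.unit.app X) inferInstance
  refine ⟨adj.unit.app (𝟙_ M) ≫ hL.hom.app (𝟙_ M) ≫ (ρ_ e).hom, ?_, ?_⟩
  · -- π ▷ e iso, via weak symmetry from e ◁ π iso
    set π : 𝟙_ M ⟶ e := adj.unit.app (𝟙_ M) ≫ hL.hom.app (𝟙_ M) ≫ (ρ_ e).hom with hπ
    haveI hlp : IsIso (e ◁ π) := by
      rw [hπ]
      simp only [MonoidalCategory.whiskerLeft_comp]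
      exact IsIso.comp_isIso' (uiso (𝟙_ M)) inferInstance
    have h := congrArg (fun t => NatTrans.app t e) (β.hom.naturality π)
    simp only [NatTrans.comp_app, curriedTensor_map_app, Functor.flip_map_app,
      curriedTensor_obj_map] at h
    -- h : π ▷ e ≫ (β.hom.app e).app e = (β.hom.app (𝟙_ M)).app e ≫ e ◁ π
    have heq : π ▷ e = (β.hom.app (𝟙_ M)).app e ≫ (e ◁ π) ≫ inv ((β.hom.app e).app e) := by
      rw [← Category.assoc, ← h]
      simp
    rw [heq]
    infer_instance
  · simp only [MonoidalCategory.whiskerLeft_comp]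
    exact IsIso.comp_isIso' (uiso (𝟙_ M)) inferInstance
end

section
/- Let Γ be a finite group, N ⊆ Γ a normal subgroup, and χ : N → ℂˣ a (not necessarily Γ-invariant) group homomorphism. Let Γ_χ = { g ∈ Γ | χ(g n g⁻¹) = χ(n) for all n ∈ N } be the normalizer of χ in Γ, and let χ̄ : Γ → ℂ be the extension of χ by zero outside of N. If f : Γ → ℂ is invariant under conjugation by N (i.e., f(n g n⁻¹) = f(g) for all n ∈ N, g ∈ Γ), then the convolution χ̄ * f vanishes at every g ∈ Γ with g ∉ Γ_χ. -/
open Finset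

/-- Let `Γ` be a finite group, `N ⊆ Γ` a normal subgroup, and
`χ : N →* ℂˣ` a (not necessarily `Γ`-invariant) homomorphism.  Let
`Γ_χ = {g | χ (g n g⁻¹) = χ n for all n ∈ N}` be the normalizer of `χ` in `Γ`, and
let `χ̄ : Γ → ℂ` be the extension of `χ` by zero outside `N`.  If `f : Γ → ℂ` is
invariant under conjugation by `N`, then the convolution
`(χ̄ * f)(g) = ∑ u, χ̄ u * f (u⁻¹ g)` vanishes at every `g ∉ Γ_χ`. -/
theorem stmt_18 (Γ : Type*) [Group Γ] [Fintype Γ]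
    (N : Subgroup Γ) (hN : N.Normal) [DecidablePred (· ∈ N)]
    (χ : ↥N →* ℂˣ) (f : Γ → ℂ)
    (hf : ∀ n ∈ N, ∀ g : Γ, f (n * g * n⁻¹) = f g)
    (g : Γ)
    (hg : g ∉ {g : Γ | ∀ n : ↥N,
      χ ⟨g * (n : Γ) * g⁻¹, hN.conj_mem (n : Γ) n.2 g⟩ = χ n}) :
    (∑ u : Γ, (if h : u ∈ N then ((χ ⟨u, h⟩ : ℂˣ) : ℂ) else 0) * f (u⁻¹ * g)) = 0 := by
  simp only [Set.mem_setOf_eq, not_forall] at hg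
  obtain ⟨m, hm⟩ := hg
  set T : Γ → ℂ := fun u => (if h : u ∈ N then ((χ ⟨u, h⟩ : ℂˣ) : ℂ) else 0) * f (u⁻¹ * g)
    with hT
  set a : Γ := g * (m : Γ)⁻¹ * g⁻¹ with ha
  have haN : a ∈ N := hN.conj_mem ((m : Γ)⁻¹) (inv_mem m.2) g
  have hainv : (⟨a, haN⟩ : ↥N) = (⟨g * (m : Γ) * g⁻¹, hN.conj_mem (m : Γ) m.2 g⟩ : ↥N)⁻¹ := by
    ext; simp [ha]; group
  set c : ℂˣ := χ ⟨a, haN⟩ * χ m with hc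
  have hc1 : c ≠ 1 := by
    intro h
    apply hm
    rw [hc, hainv, map_inv] at h
    exact inv_mul_eq_one.mp h
  have key : ∀ u : Γ, T (a * u * (m : Γ)) = (c : ℂ) * T u := by
    intro u
    by_cases h : u ∈ N
    · have h2 : a * u * (m : Γ) ∈ N := mul_mem (mul_mem haN h) m.2
      have hmem : (⟨a * u * (m : Γ), h2⟩ : ↥N) = ⟨a, haN⟩ * ⟨u, h⟩ * m := rfl
      have hfeq : f ((a * u * (m : Γ))⁻¹ * g) = f (u⁻¹ * g) := by
        have := hf ((m : Γ)⁻¹) (inv_mem m.2) (u⁻¹ * g)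
        rw [inv_inv] at this
        rw [← this]
        congr 1
        simp [ha]; group
      rw [hT]
      simp only [dif_pos h, dif_pos h2, hmem, map_mul, hfeq, hc]
      push_cast
      ring
    · have h2 : a * u * (m : Γ) ∉ N := by
        intro h2
        apply h
        have : u = a⁻¹ * (a * u * (m : Γ)) * (m : Γ)⁻¹ := by group
        rw [this]
        exact mul_mem (mul_mem (inv_mem haN) h2) (inv_mem m.2)
      rw [hT]
      simp only [dif_neg h, dif_neg h2, zero_mul, mul_zero]
  have hsum : ∑ u : Γ, T u = (c : ℂ) * ∑ u : Γ, T u := by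
    have hb := Fintype.sum_bijective _
      ((Equiv.mulLeft a).trans (Equiv.mulRight (m : Γ))).bijective
      (fun u => (c : ℂ) * T u) T (fun x => (key x).symm)
    rw [Finset.mul_sum]
    exact hb.symm
  have : ((c : ℂ) - 1) * ∑ u : Γ, T u = 0 := by
    rw [sub_mul, one_mul, ← hsum, sub_self]
  rcases mul_eq_zero.mp this with h | h
  · exact absurd (Units.ext (by simpa using sub_eq_zero.mp h)) hc1
  · exact h
end
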